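/- Let f : ℝᵐ → ℝ be a concave C¹-smooth function that is (λ'/2)‖·‖²-convex, meaning f = P_{1/λ'} Q_{1/λ'} f where Q_s f(x) = inf_y (f(y) + (1/(2s))‖x−y‖²) and P_s g(x) = sup_y (g(y) − (1/(2s))‖x−y‖²). Then for every λ > λ' and every x ∈ ℝᵐ, f(x) − Q_{1/λ} f(x) ≤ (1/(2(λ − λ'))) ‖∇f(x)‖*². -/

import Mathlib

-- gradient inequality for concave differentiable functions
lemma concave_grad {m : ℕ} {f : (Fin m → ℝ) → ℝ} (hconc : ConcaveOn ℝ Set.univ f)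
    (hd : Differentiable ℝ f) (x z : Fin m → ℝ) :
    f z ≤ f x + fderiv ℝ f x (z - x) := by
  by_cases hzx : z = x
  · simp [hzx]
  set γ : ℝ → (Fin m → ℝ) := fun t => x + t • (z - x) with hγ
  have hφconc : ConcaveOn ℝ Set.univ (f ∘ γ) := by
    have := hconc.comp_affineMap (AffineMap.lineMap x z : ℝ →ᵃ[ℝ] (Fin m → ℝ))
    have heq : f ∘ (AffineMap.lineMap x z : ℝ →ᵃ[ℝ] (Fin m → ℝ)) = f ∘ γ := by
      funext t
      simp only [Function.comp_apply, hγ, AffineMap.lineMap_apply, vadd_eq_add]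
      rw [show t • (z -ᵥ x) + x = x + t • (z - x) by simp [vsub_eq_sub]; module]
    rw [heq] at this
    simpa using this
  have hγd : HasDerivAt γ (z - x) 0 := by
    have h1 : HasDerivAt (fun t : ℝ => t • (z - x)) ((1:ℝ) • (z - x)) 0 :=
      (hasDerivAt_id (0:ℝ)).smul_const (z - x)
    simpa only [one_smul] using h1.const_add x
  have hγ0 : γ 0 = x := by simp [hγ]
  have hfd : HasFDerivAt f (fderiv ℝ f x) (γ 0) := by
    rw [hγ0]; exact (hd x).hasFDerivAt
  have hφd : HasDerivAt (f ∘ γ) (fderiv ℝ f x (z - x)) 0 := hfd.comp_hasDerivAt 0 hγd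
  have hslope := hφconc.slope_le_of_hasDerivAt (Set.mem_univ 0) (Set.mem_univ 1)
    zero_lt_one hφd
  have : slope (f ∘ γ) 0 1 = f z - f x := by
    simp [slope, hγ, hγ0]
  rw [this] at hslope
  linarith

lemma norm_comp {m : ℕ} (N : (Fin m → ℝ) → ℝ)
    (hN_nonneg : ∀ x, 0 ≤ N x)
    (hN_eq_zero : ∀ x, N x = 0 ↔ x = 0)
    (hN_smul : ∀ (c : ℝ) (x), N (c • x) = |c| * N x)
    (hN_add : ∀ x y, N (x + y) ≤ N x + N y)
    (hm : 0 < m) :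
    ∃ c > 0, ∀ v, c * ‖v‖ ≤ N v := by
  have hN0 : N 0 = 0 := (hN_eq_zero 0).mpr rfl
  -- upper bound: N v ≤ C * ‖v‖
  have hsum : ∀ (s : Finset (Fin m)) (w : Fin m → (Fin m → ℝ)),
      N (∑ i ∈ s, w i) ≤ ∑ i ∈ s, N (w i) := by
    intro s
    induction s using Finset.induction with
    | empty => simp [hN0]
    | insert a s hni ih =>
      intro w
      rw [Finset.sum_insert hni, Finset.sum_insert hni]
      exact (hN_add _ _).trans (by linarith [ih w])
  set C : ℝ := ∑ i : Fin m, N (Pi.single i 1) with hC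
  have hCnn : 0 ≤ C := Finset.sum_nonneg fun i _ => hN_nonneg _
  have hup : ∀ v, N v ≤ C * ‖v‖ := by
    intro v
    have hv : v = ∑ i : Fin m, v i • (Pi.single i (1:ℝ) : Fin m → ℝ) := by
      funext j
      simp [Finset.sum_apply, Pi.single_apply]
    calc N v = N (∑ i : Fin m, v i • (Pi.single i (1:ℝ) : Fin m → ℝ)) := by rw [← hv]
      _ ≤ ∑ i : Fin m, N (v i • (Pi.single i (1:ℝ) : Fin m → ℝ)) := hsum _ _
      _ ≤ ∑ i : Fin m, ‖v‖ * N (Pi.single i 1) := by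
          refine Finset.sum_le_sum fun i _ => ?_
          rw [hN_smul]
          have h1 : |v i| ≤ ‖v‖ := by
            have := norm_le_pi_norm v i
            simpa [Real.norm_eq_abs] using this
          exact mul_le_mul_of_nonneg_right h1 (hN_nonneg _)
      _ = C * ‖v‖ := by rw [← Finset.mul_sum]; ring
  -- continuity of N
  have hcont : Continuous N := by
    have hlip : LipschitzWith (Real.toNNReal C) N := by
      apply LipschitzWith.of_dist_le_mul
      intro a b
      rw [Real.dist_eq, Real.coe_toNNReal _ hCnn]
      rw [abs_sub_le_iff]
      constructor
      · have h1 : N a ≤ N (a - b) + N b := by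
          have := hN_add (a - b) b; simpa using this
        have := hup (a - b)
        rw [dist_eq_norm]; linarith
      · have h1 : N b ≤ N (b - a) + N a := by
          have := hN_add (b - a) a; simpa using this
        have h2 := hup (b - a)
        rw [norm_sub_rev b a] at h2
        rw [dist_eq_norm]; linarith
    exact hlip.continuous
  -- min on the sphere
  haveI : Nontrivial (Fin m → ℝ) := by
    refine ⟨Pi.single ⟨0, hm⟩ 1, 0, fun h => ?_⟩
    have := congrFun h ⟨0, hm⟩
    simp at this
  have hsph : (Metric.sphere (0 : Fin m → ℝ) 1).Nonempty :=
    NormedSpace.sphere_nonempty.mpr zero_le_one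
  obtain ⟨v₀, hv₀mem, hv₀min⟩ :=
    (isCompact_sphere (0 : Fin m → ℝ) 1).exists_isMinOn hsph hcont.continuousOn
  have hv₀norm : ‖v₀‖ = 1 := by simpa using hv₀mem
  have hv₀ne : v₀ ≠ 0 := by
    intro h; rw [h] at hv₀norm; simp at hv₀norm
  have hc : 0 < N v₀ := by
    rcases (hN_nonneg v₀).lt_or_eq with h | h
    · exact h
    · exact absurd ((hN_eq_zero v₀).mp h.symm) hv₀ne
  refine ⟨N v₀, hc, fun v => ?_⟩
  by_cases hv : v = 0
  · simp [hv, hN0]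
  · have hvn : ‖v‖ ≠ 0 := norm_ne_zero_iff.mpr hv
    have hu : (‖v‖⁻¹ • v) ∈ Metric.sphere (0 : Fin m → ℝ) 1 := by
      simp [norm_smul, abs_of_nonneg (inv_nonneg.mpr (norm_nonneg v)),
        inv_mul_cancel₀ hvn]
    have := hv₀min hu
    simp only [Set.mem_setOf_eq] at this
    rw [hN_smul] at this
    rw [abs_of_nonneg (inv_nonneg.mpr (norm_nonneg v))] at this
    have hvpos : 0 < ‖v‖ := lt_of_le_of_ne (norm_nonneg v) (Ne.symm hvn)
    calc N v₀ * ‖v‖ ≤ (‖v‖⁻¹ * N v) * ‖v‖ := by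
          exact mul_le_mul_of_nonneg_right this (norm_nonneg v)
      _ = N v := by field_simp


set_option maxHeartbeats 1000000 in
theorem stmt_14 {m : ℕ} (N : (Fin m → ℝ) → ℝ)
    (hN_nonneg : ∀ x, 0 ≤ N x)
    (hN_eq_zero : ∀ x, N x = 0 ↔ x = 0)
    (hN_smul : ∀ (c : ℝ) (x), N (c • x) = |c| * N x)
    (hN_add : ∀ x y, N (x + y) ≤ N x + N y)
    (f : (Fin m → ℝ) → ℝ) (hconc : ConcaveOn ℝ Set.univ f)
    (hlip : ∃ K : NNReal, LipschitzWith K f)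
    (hbdd : BddAbove (Set.range f)) (hC1 : ContDiff ℝ 1 f)
    (lam' : ℝ) (hlam' : 0 < lam')
    (hconvc : ∀ x : Fin m → ℝ,
      f x = ⨆ y : Fin m → ℝ,
        ((⨅ z : Fin m → ℝ, (f z + (lam' / 2) * (N (y - z)) ^ 2)) -
          (lam' / 2) * (N (x - y)) ^ 2)) :
    ∀ lam : ℝ, lam' < lam → ∀ x : Fin m → ℝ, ∀ g : ℝ,
      IsLUB {r : ℝ | ∃ u, N u = 1 ∧ r = fderiv ℝ f x u} g →
      f x - (⨅ y : Fin m → ℝ, (f y + (lam / 2) * (N (x - y)) ^ 2)) ≤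
        (1 / (2 * (lam - lam'))) * g ^ 2 := by
  intro lam hlam x g hg
  rcases Nat.eq_zero_or_pos m with hm | hm
  · -- m = 0 : the set is empty, no LUB exists in ℝ
    subst hm
    exfalso
    have hub : (g - 1) ∈ upperBounds {r : ℝ | ∃ u, N u = 1 ∧ r = fderiv ℝ f x u} := by
      rintro r ⟨u, hu, rfl⟩
      exfalso
      rw [Subsingleton.elim u 0] at hu
      rw [(hN_eq_zero 0).mpr rfl] at hu
      exact zero_ne_one hu
    have := hg.2 hub
    linarith
  -- main case
  obtain ⟨K, hK⟩ := hlip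
  obtain ⟨c, hc, hclow⟩ := norm_comp N hN_nonneg hN_eq_zero hN_smul hN_add hm
  have hd : Differentiable ℝ f := hC1.differentiable one_ne_zero
  have hN0 : N 0 = 0 := (hN_eq_zero 0).mpr rfl
  have hNneg : ∀ v, N (-v) = N v := by
    intro v
    have := hN_smul (-1) v
    simpa using this
  set D := fderiv ℝ f x with hD
  clear_value D
  -- g is nonnegative
  have hg0 : 0 ≤ g := by
    set v₁ : Fin m → ℝ := Pi.single ⟨0, hm⟩ 1 with hv₁
    clear_value v₁
    have hv₁ne : v₁ ≠ 0 := by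
      intro h
      have := congrFun h ⟨0, hm⟩
      simp [hv₁] at this
    have hNv₁ : 0 < N v₁ := by
      rcases (hN_nonneg v₁).lt_or_eq with h | h
      · exact h
      · exact absurd ((hN_eq_zero v₁).mp h.symm) hv₁ne
    set u₁ : Fin m → ℝ := (N v₁)⁻¹ • v₁ with hu₁
    clear_value u₁
    have hNu₁ : N u₁ = 1 := by
      rw [hu₁, hN_smul, abs_of_nonneg (inv_nonneg.mpr (hN_nonneg v₁)),
        inv_mul_cancel₀ hNv₁.ne']
    have h1 : D u₁ ≤ g := hg.1 ⟨u₁, hNu₁, rfl⟩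
    have h2 : D (-u₁) ≤ g := by
      refine hg.1 ⟨-u₁, ?_, rfl⟩
      rw [hNneg]; exact hNu₁
    rw [map_neg] at h2
    linarith
  -- dual-norm bound on the derivative
  have hdual : ∀ v, D v ≤ g * N v := by
    intro v
    by_cases hv : N v = 0
    · have hv0 : v = 0 := (hN_eq_zero v).mp hv
      rw [hv0, map_zero, hN0]
      simp
    · have hvpos : 0 < N v := (hN_nonneg v).lt_of_ne (Ne.symm hv)
      have hNu : N ((N v)⁻¹ • v) = 1 := by
        rw [hN_smul, abs_of_nonneg (inv_nonneg.mpr (hN_nonneg v)),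
          inv_mul_cancel₀ hvpos.ne']
      have h1 : D ((N v)⁻¹ • v) ≤ g := hg.1 ⟨_, hNu, rfl⟩
      rw [map_smul, smul_eq_mul] at h1
      have h2 := mul_le_mul_of_nonneg_left h1 hvpos.le
      rw [← mul_assoc, mul_inv_cancel₀ hvpos.ne', one_mul] at h2
      linarith [h2]
  -- bounded below for the infimal convolutions
  have hQbdd : ∀ y : Fin m → ℝ,
      BddBelow (Set.range fun z => f z + lam' / 2 * N (y - z) ^ 2) := by
    intro y
    set M : ℝ := (K : ℝ) / c with hM
    clear_value M
    have hMnn : 0 ≤ M := by rw [hM]; exact div_nonneg K.coe_nonneg hc.le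
    refine ⟨f y - M ^ 2 / (2 * lam'), ?_⟩
    rintro _ ⟨z, rfl⟩
    set t : ℝ := N (y - z) with ht
    clear_value t
    have ht0 : 0 ≤ t := by rw [ht]; exact hN_nonneg _
    have hlipz : f y - f z ≤ M * t := by
      have h1 : |f y - f z| ≤ (K : ℝ) * ‖y - z‖ := by
        have := hK.dist_le_mul y z
        rwa [Real.dist_eq, dist_eq_norm] at this
      have h2 : c * ‖y - z‖ ≤ t := by rw [ht]; exact hclow (y - z)
      have h3 : ‖y - z‖ ≤ t / c := (le_div_iff₀ hc).mpr (by linarith)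
      have h4 : (K : ℝ) * ‖y - z‖ ≤ (K : ℝ) * (t / c) :=
        mul_le_mul_of_nonneg_left h3 K.coe_nonneg
      have h5 : (K : ℝ) * (t / c) = M * t := by rw [hM]; ring
      calc f y - f z ≤ |f y - f z| := le_abs_self _
        _ ≤ (K : ℝ) * ‖y - z‖ := h1
        _ ≤ M * t := by rw [← h5]; exact h4
    have hqd : M * t - lam' / 2 * t ^ 2 ≤ M ^ 2 / (2 * lam') := by
      rw [le_div_iff₀ (by positivity)]
      linarith [sq_nonneg (lam' * t - M)]
    show f y - M ^ 2 / (2 * lam') ≤ f z + lam' / 2 * N (y - z) ^ 2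
    rw [← ht]
    linarith
  -- main estimate via approximate optimizers
  have hden : (0:ℝ) < 2 * (lam - lam') := by linarith
  set G : ℝ := 1 / (2 * (lam - lam')) * g ^ 2 with hG
  clear_value G
  refine le_of_forall_pos_le_add ?_
  intro δ hδ
  set A : ℝ := max 1 ((2 * g + 2) / lam') with hA
  clear_value A
  have hA1 : 1 ≤ A := by rw [hA]; exact le_max_left _ _
  set C₁ : ℝ := 1 + lam' / 2 * A ^ 2 with hC₁
  clear_value C₁
  have hC₁nn : 0 ≤ C₁ := by rw [hC₁]; positivity
  set C₂ : ℝ := lam' + C₁ with hC₂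
  clear_value C₂
  have hC₂nn : 0 ≤ C₂ := by rw [hC₂]; linarith [hC₁nn, hlam'.le]
  set R : ℝ := (2 * g * C₂ + C₂ ^ 2) / (2 * (lam - lam')) with hR
  clear_value R
  have hRnn : 0 ≤ R := by
    rw [hR]
    apply div_nonneg _ hden.le
    nlinarith [hg0, hC₂nn, sq_nonneg C₂]
  set C₄ : ℝ := 1 + R with hC₄
  clear_value C₄
  have hC₄pos : 0 < C₄ := by rw [hC₄]; linarith [hRnn]
  set η : ℝ := min 1 (δ / C₄) with hη_def
  clear_value η
  have hη : 0 < η := by rw [hη_def]; exact lt_min one_pos (div_pos hδ hC₄pos)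
  have hη1 : η ≤ 1 := by rw [hη_def]; exact min_le_left _ _
  have hC₄η : C₄ * η ≤ δ := by
    have h1 : η ≤ δ / C₄ := by rw [hη_def]; exact min_le_right _ _
    have := (le_div_iff₀ hC₄pos).mp h1
    linarith
  -- it suffices to prove the bound with error C₄ * η
  have main : f x - (⨅ y : Fin m → ℝ, (f y + (lam / 2) * (N (x - y)) ^ 2)) ≤ G + C₄ * η := by
    have hη4 : (0:ℝ) < η ^ 4 := by positivity
    have hlt : f x - η ^ 4 < ⨆ y : Fin m → ℝ,
        ((⨅ z : Fin m → ℝ, (f z + (lam' / 2) * (N (y - z)) ^ 2)) -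
          (lam' / 2) * (N (x - y)) ^ 2) := by
      rw [← hconvc x]; linarith
    obtain ⟨y₀, hy₀⟩ := exists_lt_of_lt_ciSup hlt
    set a : ℝ := N (x - y₀) with ha
    clear_value a
    have ha0 : 0 ≤ a := by rw [ha]; exact hN_nonneg _
    have hNyx : N (y₀ - x) = a := by
      rw [show y₀ - x = -(x - y₀) by module, hNneg]
      exact ha.symm
    have key : ∀ z, f x - η ^ 4 + lam' / 2 * a ^ 2 - lam' / 2 * N (y₀ - z) ^ 2 < f z := by
      intro z
      have h1 : (⨅ z : Fin m → ℝ, (f z + (lam' / 2) * (N (y₀ - z)) ^ 2)) ≤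
          f z + lam' / 2 * N (y₀ - z) ^ 2 := ciInf_le (hQbdd y₀) z
      linarith
    -- step 1 : a is bounded by A
    have hkey1 : f x - η ^ 4 + lam' / 2 * a ^ 2 < f y₀ := by
      have := key y₀
      rw [sub_self, hN0] at this
      simpa using this
    have hgrad1 : f y₀ ≤ f x + D (y₀ - x) := by
      have := concave_grad hconc hd x y₀
      rwa [← hD] at this
    have hDy : D (y₀ - x) ≤ g * a := by
      have := hdual (y₀ - x)
      rwa [hNyx] at this
    have hquad1 : lam' / 2 * a ^ 2 ≤ g * a + η ^ 4 := by linarith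
    have haA : a ≤ A := by
      rcases le_or_gt a 1 with h | h
      · exact h.trans hA1
      · have hη41 : η ^ 4 ≤ 1 := pow_le_one₀ hη.le hη1
        have h1' : lam' * a * a ≤ (2 * g + 2) * a := by linarith [hquad1, hη41, hg0, h]
        have h1 : lam' * a ≤ 2 * g + 2 := le_of_mul_le_mul_right h1' (lt_trans one_pos h)
        have h2 : a ≤ (2 * g + 2) / lam' := (le_div_iff₀ hlam').mpr (by linarith)
        rw [hA]
        exact h2.trans (le_max_right _ _)
    -- step 2 : refined bound using the point x + η² (y₀ - x)
    have hη2pos : (0:ℝ) < η ^ 2 := by positivity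
    have hη21 : η ^ 2 ≤ 1 := pow_le_one₀ hη.le hη1
    set z₁ : Fin m → ℝ := x + η ^ 2 • (y₀ - x) with hz₁
    clear_value z₁
    have hz₁x : z₁ - x = η ^ 2 • (y₀ - x) := by rw [hz₁]; module
    have hNyz₁ : N (y₀ - z₁) = (1 - η ^ 2) * a := by
      have h1 : y₀ - z₁ = (1 - η ^ 2) • (y₀ - x) := by rw [hz₁]; module
      rw [h1, hN_smul, abs_of_nonneg (by linarith), hNyx]
    have hkey2 := key z₁
    rw [hNyz₁] at hkey2
    have hgrad2 : f z₁ ≤ f x + η ^ 2 * D (y₀ - x) := by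
      have h1 := concave_grad hconc hd x z₁
      rw [← hD] at h1
      rwa [hz₁x, map_smul, smul_eq_mul] at h1
    have hDz : η ^ 2 * D (y₀ - x) ≤ η ^ 2 * (g * a) :=
      mul_le_mul_of_nonneg_left hDy hη2pos.le
    have H : lam' / 2 * a ^ 2 - lam' / 2 * ((1 - η ^ 2) * a) ^ 2 ≤ η ^ 2 * (g * a) + η ^ 4 := by
      linarith
    have h2 : lam' * a ^ 2 * η ^ 2 ≤ (g * a + η ^ 2 + lam' / 2 * a ^ 2 * η ^ 2) * η ^ 2 := by
      linarith [H]
    have h3 : lam' * a ^ 2 ≤ g * a + η ^ 2 + lam' / 2 * a ^ 2 * η ^ 2 :=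
      le_of_mul_le_mul_right h2 hη2pos
    have haA2 : a ^ 2 ≤ A ^ 2 := pow_le_pow_left₀ ha0 haA 2
    have h4 : lam' * a ^ 2 ≤ g * a + C₁ * η ^ 2 := by
      have h5 : lam' / 2 * a ^ 2 * η ^ 2 ≤ lam' / 2 * A ^ 2 * η ^ 2 := by
        have := mul_le_mul_of_nonneg_right
          (mul_le_mul_of_nonneg_left haA2 (by positivity : (0:ℝ) ≤ lam' / 2)) hη2pos.le
        linarith [this]
      rw [hC₁]
      linarith [h3, h5]
    -- step 3 : lam' * a ≤ g + C₂ * η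
    have hB : lam' * a ≤ g + C₂ * η := by
      rcases le_or_gt a η with h | h
      · have h1 : lam' * a ≤ lam' * η := mul_le_mul_of_nonneg_left h hlam'.le
        have h2 : lam' * η ≤ C₂ * η := by
          apply mul_le_mul_of_nonneg_right _ hη.le
          rw [hC₂]; linarith
        linarith
      · rcases le_or_gt (lam' * a) g with h' | h'
        · linarith [mul_nonneg hC₂nn hη.le]
        · have h1 : η * (lam' * a - g) ≤ a * (lam' * a - g) :=
            mul_le_mul_of_nonneg_right h.le (by linarith)
          have h2 : a * (lam' * a - g) ≤ C₁ * η ^ 2 := by linarith [h4]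
          have h3 : η * (lam' * a - g) ≤ C₁ * η * η := by linarith [h1, h2]
          have h4' : lam' * a - g ≤ C₁ * η := le_of_mul_le_mul_left (by linarith [h3] : η * (lam' * a - g) ≤ η * (C₁ * η)) hη
          have h5 : C₁ * η ≤ C₂ * η := by
            apply mul_le_mul_of_nonneg_right _ hη.le
            rw [hC₂]; linarith
          linarith
    -- step 4 : final bound for each z
    have hfinal : ∀ z, f x - (G + C₄ * η) ≤ f z + lam / 2 * N (x - z) ^ 2 := by
      intro z
      have hk := key z
      set b : ℝ := N (x - z) with hb
      clear_value b
      have hb0 : 0 ≤ b := by rw [hb]; exact hN_nonneg _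
      have htri : N (y₀ - z) ≤ a + b := by
        have h1 : y₀ - z = (y₀ - x) + (x - z) := by module
        rw [h1]
        calc N ((y₀ - x) + (x - z)) ≤ N (y₀ - x) + N (x - z) := hN_add _ _
          _ = a + b := by rw [hNyx, ← hb]
      have hsq : N (y₀ - z) ^ 2 ≤ (a + b) ^ 2 :=
        pow_le_pow_left₀ (hN_nonneg _) htri 2
      have step1 : f x - η ^ 4 - lam' * a * b + (lam - lam') / 2 * b ^ 2 ≤
          f z + lam / 2 * b ^ 2 := by
        linarith [hk, mul_le_mul_of_nonneg_left hsq (by positivity : (0:ℝ) ≤ lam' / 2)]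
      have step2 : lam' * a * b ≤ (g + C₂ * η) * b := by
        have := mul_le_mul_of_nonneg_right hB hb0
        linarith [this]
      have step3 : (g + C₂ * η) * b - (lam - lam') / 2 * b ^ 2 ≤
          (g + C₂ * η) ^ 2 / (2 * (lam - lam')) := by
        rw [le_div_iff₀ hden]
        linarith [sq_nonneg ((lam - lam') * b - (g + C₂ * η))]
      have step4 : (g + C₂ * η) ^ 2 / (2 * (lam - lam')) ≤ G + R * η := by
        have hnum : (g + C₂ * η) ^ 2 ≤ g ^ 2 + (2 * g * C₂ + C₂ ^ 2) * η := by
          have hx1 : 0 ≤ C₂ ^ 2 * η * (1 - η) :=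
            mul_nonneg (mul_nonneg (sq_nonneg C₂) hη.le) (by linarith)
          linarith [hx1]
        have hdiv : (g + C₂ * η) ^ 2 / (2 * (lam - lam')) ≤
            (g ^ 2 + (2 * g * C₂ + C₂ ^ 2) * η) / (2 * (lam - lam')) :=
          div_le_div_of_nonneg_right hnum hden.le |>.trans_eq rfl
        have heq : (g ^ 2 + (2 * g * C₂ + C₂ ^ 2) * η) / (2 * (lam - lam')) = G + R * η := by
          rw [hG, hR]; field_simp
        linarith [hdiv, heq.le, heq.ge]
      have hη4η : η ^ 4 ≤ η := pow_le_of_le_one hη.le hη1 (by norm_num)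
      have hC₄exp : C₄ * η = η + R * η := by rw [hC₄]; ring
      linarith
    have hI : f x - (G + C₄ * η) ≤
        ⨅ y : Fin m → ℝ, (f y + (lam / 2) * (N (x - y)) ^ 2) :=
      le_ciInf fun z => by linarith [hfinal z]
    linarith
  linarith
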